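/- Let M be a finite MDP with non-negative integer costs C : S × A → ℕ and target set T ⊆ S. Define the Bellman operator F on vectors v ∈ (ℕ ∪ {∞})^S by F(v)(s) = 0 if s ∈ T, and F(v)(s) = min over actions a of (C(s,a) + max over successors t ∈ Succ(s,a) of v(t)) otherwise. Let x_T be the vector with x_T(s) = 0 for s ∈ T and ∞ otherwise, and let n be the length of the longest simple path in M. Then iterating F on x_T reaches a fixed point in at most n steps, i.e., F^{n+1}(x_T) = F^n(x_T). -/

import Mathlib

open scoped Classical NNReal ENat

noncomputable section

/-- A consumption Markov decision process. -/
structure CMDP (S A : Type) [Fintype S] where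
  Δ : S → A → S → NNReal
  Δ_sum : ∀ s a, (∑ t, Δ s a t) = 1
  C : S → A → ℕ
  R : Set S
  cap : ℕ

namespace CMDP

variable {S A : Type} [Fintype S]

/-- Strategies map histories (initial state, list of action/state steps) to actions. -/
abbrev Strat (S A : Type) : Type := S × List (A × S) → A

/-- Last state of a history. -/
def lastState (s : S) : List (A × S) → S
  | [] => s
  | (_, t) :: rest => lastState t rest

/-- The `i`-th state (0-indexed) of a history. -/
def stateAt (s : S) (steps : List (A × S)) (i : ℕ) : S :=
  (s :: steps.map Prod.snd).getD i s

variable (M : CMDP S A)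

def Succ (s : S) (a : A) : Set S := {t | 0 < M.Δ s a t}

/-- Total consumption along a finite path. -/
def consAux : S → List (A × S) → ℕ
  | _, [] => 0
  | s, (a, t) :: rest => M.C s a + consAux t rest

/-- One step of the energy-level update. -/
def levelStep (s : S) (a : A) (l : ℕ) : Option ℕ :=
  if s ∈ M.R then (if M.C s a ≤ M.cap then some (M.cap - M.C s a) else none)
  else (if M.C s a ≤ l then some (l - M.C s a) else none)

def energyFrom : Option ℕ → S → List (A × S) → Option ℕ
  | none, _, _ => none
  | some l, _, [] => some l
  | some l, s, (a, t) :: rest => energyFrom (M.levelStep s a l) t rest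

/-- Energy level of a history initialized by `d` (`none` = ⊥, exhaustion). -/
def energy (d : ℕ) (s : S) (steps : List (A × S)) : Option ℕ :=
  M.energyFrom (some d) s steps

/-- Validity of a finite path. -/
def ValidPath : S → List (A × S) → Prop
  | _, [] => True
  | s, (a, t) :: rest => t ∈ M.Succ s a ∧ ValidPath t rest

/-- First state of a run. -/
def runState (ρ : ℕ → S × A) (i : ℕ) : S := (ρ i).1

/-- The finite prefix of a run with `i` steps. -/
def prefixSteps (ρ : ℕ → S × A) (i : ℕ) : List (A × S) :=
  (List.range i).map fun k => ((ρ k).2, (ρ (k + 1)).1)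

def IsRun (ρ : ℕ → S × A) : Prop := ∀ i, (ρ (i + 1)).1 ∈ M.Succ (ρ i).1 (ρ i).2

/-- A run is `d`-safe if the energy level of every finite prefix is defined. -/
def DSafe (d : ℕ) (ρ : ℕ → S × A) : Prop :=
  ∀ i, M.energy d (runState ρ 0) (prefixSteps ρ i) ≠ none

/-- A run is compatible with a strategy. -/
def Compat (σ : Strat S A) (ρ : ℕ → S × A) : Prop :=
  M.IsRun ρ ∧ ∀ i, (ρ i).2 = σ (runState ρ 0, prefixSteps ρ i)

def CompatFrom (σ : Strat S A) (s : S) (ρ : ℕ → S × A) : Prop :=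
  M.Compat σ ρ ∧ runState ρ 0 = s

/-- A strategy is `d`-safe in `s` if all compatible runs from `s` are `d`-safe. -/
def SafeStrat (σ : Strat S A) (d : ℕ) (s : S) : Prop :=
  ∀ ρ, M.CompatFrom σ s ρ → M.DSafe d ρ

/-- A finite history compatible with a strategy. -/
def CompatHist (σ : Strat S A) (s : S) (steps : List (A × S)) : Prop :=
  M.ValidPath s steps ∧
    ∀ (i : ℕ) (h : i < steps.length), (steps.get ⟨i, h⟩).1 = σ (s, steps.take i)

def Memoryless (σ : Strat S A) : Prop :=
  ∀ h₁ h₂ : S × List (A × S), lastState h₁.1 h₁.2 = lastState h₂.1 h₂.2 → σ h₁ = σ h₂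

/-- Cost of a run up to the first visit of `T` (∞ if `T` is never visited). -/
def reachCost (T : Set S) (ρ : ℕ → S × A) : ℕ∞ :=
  ⨅ i ∈ {i : ℕ | runState ρ i ∈ T}, (M.consAux (runState ρ 0) (prefixSteps ρ i) : ℕ∞)

/-- `i`-step bounded reachability cost. -/
def reachCostBdd (T : Set S) (n : ℕ) (ρ : ℕ → S × A) : ℕ∞ :=
  ⨅ i ∈ {i : ℕ | i ≤ n ∧ runState ρ i ∈ T}, (M.consAux (runState ρ 0) (prefixSteps ρ i) : ℕ∞)

/-- Reachability cost requiring at least one step. -/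
def reachCostPlus (T : Set S) (ρ : ℕ → S × A) : ℕ∞ :=
  ⨅ i ∈ {i : ℕ | 1 ≤ i ∧ runState ρ i ∈ T}, (M.consAux (runState ρ 0) (prefixSteps ρ i) : ℕ∞)

def reachCostStrat (T : Set S) (σ : Strat S A) (s : S) : ℕ∞ :=
  ⨆ ρ ∈ {ρ | M.CompatFrom σ s ρ}, M.reachCost T ρ

def minReach (T : Set S) (s : S) : ℕ∞ :=
  ⨅ σ : Strat S A, M.reachCostStrat T σ s

def minReachBdd (T : Set S) (n : ℕ) (s : S) : ℕ∞ :=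
  ⨅ σ : Strat S A, ⨆ ρ ∈ {ρ | M.CompatFrom σ s ρ}, M.reachCostBdd T n ρ

def minReachPlus (T : Set S) (s : S) : ℕ∞ :=
  ⨅ σ : Strat S A, ⨆ ρ ∈ {ρ | M.CompatFrom σ s ρ}, M.reachCostPlus T ρ

/-- The Bellman operator for minimum cost reachability of `T`. -/
def bellman (T : Set S) (v : S → ℕ∞) : S → ℕ∞ := fun s =>
  if s ∈ T then 0 else ⨅ a : A, ((M.C s a : ℕ∞) + ⨆ t ∈ M.Succ s a, v t)

/-- The initial vector: `0` on `T`, `∞` elsewhere. -/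
def xTvec (T : Set S) : S → ℕ∞ := fun s => if s ∈ T then 0 else ⊤

/-- Length of the longest simple path of `M`. -/
def longestSimple : ℕ :=
  sSup {n | ∃ (s : S) (steps : List (A × S)),
    M.ValidPath s steps ∧ (s :: steps.map Prod.snd).Nodup ∧ steps.length = n}

/-- The augmented CMDP `M̃` with a fresh non-reload copy of every state. -/
def augment : CMDP (S ⊕ S) A where
  Δ := fun x a t =>
    Sum.elim (fun u => M.Δ (Sum.elim id id x) a u) (fun _ => (0 : NNReal)) t
  Δ_sum := by
    intro x a
    rw [Fintype.sum_sum_type]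
    simp [M.Δ_sum (Sum.elim id id x) a]
  C := fun x a => M.C (Sum.elim id id x) a
  R := Sum.inl '' M.R
  cap := M.cap

/-- Truncation to `0` on reload states. -/
def strunc (x : S → ℕ∞) : S → ℕ∞ := fun s => if s ∈ M.R then 0 else x s

/-- The truncated Bellman-like operator `G`. -/
def opG (v : S → ℕ∞) : S → ℕ∞ := fun s =>
  ⨅ a : A, ((M.C s a : ℕ∞) + ⨆ t ∈ M.Succ s a, M.strunc v t)

/-- Minimal `d ≤ cap` such that some strategy is `d`-safe in `s` (∞ if none). -/
def safeVec (s : S) : ℕ∞ :=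
  ⨅ d ∈ {d : ℕ | d ≤ M.cap ∧ ∃ σ : Strat S A, M.SafeStrat σ d s}, (d : ℕ∞)

/-- An action safe in a state. -/
def SafeAction (s : S) (a : A) : Prop :=
  (s ∉ M.R ∧ ((M.C s a : ℕ∞) + ⨆ t ∈ M.Succ s a, M.safeVec t) ≤ M.safeVec s) ∨
  (s ∈ M.R ∧ ((M.C s a : ℕ∞) + ⨆ t ∈ M.Succ s a, M.safeVec t) ≤ (M.cap : ℕ∞))

/-- A CMDP is decreasing if every (valid) simple cycle has positive consumption. -/
def Decreasing : Prop :=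
  ∀ (s : S) (steps : List (A × S)), M.ValidPath s steps → steps ≠ [] →
    lastState s steps = s → (s :: (steps.map Prod.snd).dropLast).Nodup →
    0 < M.consAux s steps

/-- Selection according to a selection rule: the action of the largest
element of the domain below the counter value. -/
def selectFrom (φ : ℕ → Option A) (m : ℕ) (a₀ : A) : A :=
  (((List.range (m + 1)).reverse).findSome? φ).getD a₀

/-- The finite counter strategy `Σ^y` induced by a counter selector. -/
def counterStrategy (sel : S → ℕ → Option A) (y : S → ℕ) (a₀ : A) : Strat S A :=
  fun h =>
    match M.energy (y h.1) h.1 h.2 with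
    | some m => selectFrom (sel (lastState h.1 h.2)) m a₀
    | none => a₀

/-- The `SPR` value of an action. -/
def spr (s : S) (a : A) (x : S → ℕ∞) : ℕ∞ :=
  (M.C s a : ℕ∞) +
    ⨅ t ∈ M.Succ s a, max (x t) (⨆ t' ∈ {t' ∈ M.Succ s a | t' ≠ t}, M.safeVec t')

def opA (T : Set S) (x : S → ℕ∞) : S → ℕ∞ := fun s =>
  if s ∈ T then M.safeVec s else ⨅ a : A, M.spr s a x

/-- Two-sided truncation. -/
def trunc2 (x : S → ℕ∞) : S → ℕ∞ := fun s =>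
  if (M.cap : ℕ∞) < x s then ⊤ else if s ∈ M.R then 0 else x s

def opB (T : Set S) (x : S → ℕ∞) : S → ℕ∞ := M.trunc2 (M.opA T x)

def yTvec (T : Set S) : S → ℕ∞ := fun s => if s ∈ T then M.safeVec s else ⊤

def VisitsWithin (T : Set S) (i : ℕ) (ρ : ℕ → S × A) : Prop :=
  ∃ j ≤ i, runState ρ j ∈ T

def Visits (T : Set S) (ρ : ℕ → S × A) : Prop := ∃ j, runState ρ j ∈ T

/-- Minimal `ℓ ≤ cap` s.t. some `ℓ`-safe strategy from `s` has a run visiting `T`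
within the first `i` steps. -/
def safePRBdd (T : Set S) (i : ℕ) (s : S) : ℕ∞ :=
  ⨅ ℓ ∈ {ℓ : ℕ | ℓ ≤ M.cap ∧ ∃ σ : Strat S A, M.SafeStrat σ ℓ s ∧
      ∃ ρ, M.CompatFrom σ s ρ ∧ VisitsWithin T i ρ}, (ℓ : ℕ∞)

/-- Minimal `ℓ ≤ cap` s.t. some `ℓ`-safe strategy from `s` has a run visiting `T`. -/
def safePR (T : Set S) (s : S) : ℕ∞ :=
  ⨅ ℓ ∈ {ℓ : ℕ | ℓ ≤ M.cap ∧ ∃ σ : Strat S A, M.SafeStrat σ ℓ s ∧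
      ∃ ρ, M.CompatFrom σ s ρ ∧ Visits T ρ}, (ℓ : ℕ∞)

/-- Replace the set of reload states. -/
def setReload (R' : Set S) : CMDP S A := { M with R := R' }

/-- Probability of a finite continuation of a history under a strategy. -/
def pathProbAux (σ : Strat S A) : S × List (A × S) → List (A × S) → NNReal
  | _, [] => 1
  | h, (a, t) :: rest =>
      (if σ h = a then M.Δ (lastState h.1 h.2) a t else 0) *
        pathProbAux σ (h.1, h.2 ++ [(a, t)]) rest

/-- Probability that the length-`n` prefix of a run from `s` under `σ`
satisfies the predicate `P`. -/
def probEvent [Fintype A] (σ : Strat S A) (s : S) (n : ℕ) (P : List (A × S) → Prop) : NNReal :=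
  ∑ f : Fin n → A × S,
    if P (List.ofFn f) then M.pathProbAux σ (s, []) (List.ofFn f) else 0

/-- Number of visits of `T` along a finite path. -/
def visitCount (T : Set S) (s : S) (steps : List (A × S)) : ℕ :=
  (s :: steps.map Prod.snd).countP (fun x => decide (x ∈ T))

/-- `T` is visited infinitely often with probability one under `σ` from `s`. -/
def buchiAS [Fintype A] (σ : Strat S A) (s : S) (T : Set S) : Prop :=
  ∀ k : ℕ,
    (⨆ n : ℕ, M.probEvent σ s n (fun steps => k ≤ visitCount T s steps)) = 1

/-- Minimal `d ≤ cap` s.t. some strategy is `d`-safe in `s` and visits `T`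
infinitely often almost surely. -/
def safeBuchiVec [Fintype A] (T : Set S) (s : S) : ℕ∞ :=
  ⨅ d ∈ {d : ℕ | d ≤ M.cap ∧ ∃ σ : Strat S A, M.SafeStrat σ d s ∧ M.buchiAS σ s T}, (d : ℕ∞)

/-- Iterated memory update of a memory structure. -/
def updStar {Mem : Type} (upd : Mem → S → A → S → Mem) : Mem → S → List (A × S) → Mem
  | m, _, [] => m
  | m, s, (a, t) :: rest => updStar upd (upd m s a t) t rest

/-- Finite-memory strategies: encodable by a finite memory structure. -/
def FinMemStrategy (σ : Strat S A) : Prop :=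
  ∃ (Mem : Type) (_ : Finite Mem) (init : S → Mem) (upd : Mem → S → A → S → Mem)
    (nxt : Mem → S → A),
    ∀ h : S × List (A × S), σ h = nxt (updStar upd (init h.1) h.1 h.2) (lastState h.1 h.2)

/-- The joint run `α ⊙ ρ`. -/
def jointRun (s : S) (steps : List (A × S)) (ρ : ℕ → S × A) : ℕ → S × A :=
  fun i => if h : i < steps.length then (stateAt s steps i, (steps.get ⟨i, h⟩).1)
           else ρ (i - steps.length)

end CMDP
section BellmanFP

open CMDP

variable {S A : Type} [Fintype S] (M : CMDP S A) (T : Set S)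

/-- Infimum in `ℕ∞` is attained when it is not `⊤`. -/
lemma ENat.exists_eq_iInf' {ι : Type*} (f : ι → ℕ∞) (h : (⨅ i, f i) ≠ ⊤) :
    ∃ i, f i = ⨅ i, f i := by
  have hne : (Set.range f).Nonempty := by
    by_contra hc
    rw [Set.not_nonempty_iff_eq_empty, Set.range_eq_empty_iff] at hc
    exact h (iInf_eq_top.2 fun i => (hc.false i).elim)
  obtain ⟨m, ⟨i, rfl⟩, hmin⟩ := (wellFounded_lt (α := ℕ∞)).has_min (Set.range f) hne
  refine ⟨i, le_antisymm ?_ (iInf_le _ _)⟩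
  exact le_iInf fun j => not_lt.1 (hmin _ ⟨j, rfl⟩)

/-- The iterates of the Bellman operator. -/
def bvv (k : ℕ) : S → ℕ∞ := (M.bellman T)^[k] (xTvec T)

/-- Pointwise infimum of the iterates. -/
def buu (s : S) : ℕ∞ := ⨅ k, bvv M T k s

lemma bvv_succ (k : ℕ) : bvv M T (k + 1) = M.bellman T (bvv M T k) := by
  simp [bvv, Function.iterate_succ_apply']

lemma bellman_mono {v w : S → ℕ∞} (h : v ≤ w) : M.bellman T v ≤ M.bellman T w := by
  intro s
  by_cases hs : s ∈ T
  · simp [CMDP.bellman, hs]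
  · simp only [CMDP.bellman, if_neg hs]
    refine iInf_mono fun a => add_le_add_right ?_ _
    exact iSup₂_le fun t ht => le_trans (h t) (le_biSup _ ht)

lemma bvv_antitone : ∀ {k l : ℕ}, k ≤ l → bvv M T l ≤ bvv M T k := by
  have h1 : ∀ k, bvv M T (k + 1) ≤ bvv M T k := by
    intro k
    induction k with
    | zero =>
      rw [bvv_succ]
      intro s
      by_cases hs : s ∈ T
      · simp [CMDP.bellman, bvv, CMDP.xTvec, hs]
      · simp [CMDP.bellman, bvv, CMDP.xTvec, hs]
    | succ k ih =>
      calc bvv M T (k + 1 + 1) = M.bellman T (bvv M T (k + 1)) := bvv_succ M T (k + 1)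
        _ ≤ M.bellman T (bvv M T k) := bellman_mono M T ih
        _ = bvv M T (k + 1) := (bvv_succ M T k).symm
  intro k l hkl
  induction l with
  | zero => simp_all
  | succ l ih =>
    rcases Nat.lt_or_ge k (l + 1) with h | h
    · exact le_trans (h1 l) (ih (Nat.lt_succ_iff.1 h))
    · have : k = l + 1 := le_antisymm hkl h
      subst this; exact le_rfl

lemma buu_le (k : ℕ) (s : S) : buu M T s ≤ bvv M T k s := iInf_le _ _

lemma exists_bvv_eq_buu (s : S) : ∃ k, bvv M T k s = buu M T s := by
  by_cases h : buu M T s = ⊤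
  · exact ⟨0, le_antisymm (h ▸ le_top) (buu_le M T 0 s)⟩
  · exact ENat.exists_eq_iInf' _ h

/-- The first iterate at which the infimum value is reached at `s`. -/
def brank (s : S) : ℕ := Nat.find (exists_bvv_eq_buu M T s)

lemma bvv_brank (s : S) : bvv M T (brank M T s) s = buu M T s :=
  Nat.find_spec (exists_bvv_eq_buu M T s)

lemma bvv_eq_buu_of_brank_le {k : ℕ} {s : S} (h : brank M T s ≤ k) :
    bvv M T k s = buu M T s :=
  le_antisymm (le_trans (bvv_antitone M T h s) (le_of_eq (bvv_brank M T s)))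
    (buu_le M T k s)

lemma brank_le_of_bvv_eq {k : ℕ} {s : S} (h : bvv M T k s = buu M T s) :
    brank M T s ≤ k := Nat.find_le h

lemma succ_nonempty (s : S) (a : A) : ∃ t, t ∈ M.Succ s a := by
  by_contra hc
  push_neg at hc
  have hz : ∀ t, M.Δ s a t = 0 := by
    intro t
    have := hc t
    simp only [CMDP.Succ, Set.mem_setOf_eq, not_lt] at this
    exact le_antisymm this zero_le
  have := M.Δ_sum s a
  rw [Finset.sum_eq_zero fun t _ => hz t] at this
  exact zero_ne_one this

/-- The key step: from a state of positive rank, there is a successor of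
rank at least `rank s - 1` which is lexicographically smaller. -/
lemma brank_step (s : S) (h1 : 1 ≤ brank M T s) :
    ∃ (a : A) (t : S), t ∈ M.Succ s a ∧ brank M T s - 1 ≤ brank M T t ∧
      (buu M T t < buu M T s ∨ (buu M T t = buu M T s ∧ brank M T t < brank M T s)) := by
  set R := brank M T s with hR
  obtain ⟨r', hr'⟩ : ∃ r', R = r' + 1 := ⟨R - 1, (Nat.succ_pred_eq_of_pos h1).symm⟩
  -- s ∉ T
  have hT : s ∉ T := by
    intro hs
    have h0 : bvv M T 0 s = 0 := by simp [bvv, CMDP.xTvec, hs]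
    have : bvv M T 0 s = buu M T s :=
      le_antisymm (h0 ▸ zero_le) (buu_le M T 0 s)
    have := brank_le_of_bvv_eq M T this
    omega
  -- u s ≠ ⊤
  have hufin : buu M T s ≠ ⊤ := by
    intro htop
    have : bvv M T 0 s = buu M T s := le_antisymm (htop ▸ le_top) (buu_le M T 0 s)
    have := brank_le_of_bvv_eq M T this
    omega
  -- unfold at rank
  have hunf : buu M T s =
      ⨅ a : A, ((M.C s a : ℕ∞) + ⨆ t ∈ M.Succ s a, bvv M T r' t) := by
    have := bvv_brank M T s
    rw [← hR] at this
    rw [← this, hr', bvv_succ]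
    simp [CMDP.bellman, hT]
  obtain ⟨a₀, ha₀⟩ := ENat.exists_eq_iInf'
    (fun a : A => ((M.C s a : ℕ∞) + ⨆ t ∈ M.Succ s a, bvv M T r' t))
    (by rw [← hunf]; exact hufin)
  rw [← hunf] at ha₀
  -- bound for successors
  have hsucc : ∀ t ∈ M.Succ s a₀, (M.C s a₀ : ℕ∞) + bvv M T r' t ≤ buu M T s := by
    intro t ht
    calc (M.C s a₀ : ℕ∞) + bvv M T r' t
        ≤ (M.C s a₀ : ℕ∞) + ⨆ t ∈ M.Succ s a₀, bvv M T r' t :=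
          add_le_add_right (le_biSup _ ht) _
      _ = buu M T s := ha₀
  -- a successor with large rank
  have hex : ∃ t ∈ M.Succ s a₀, r' ≤ brank M T t := by
    rcases Nat.eq_zero_or_pos r' with h0 | hpos
    · obtain ⟨t, ht⟩ := succ_nonempty M s a₀
      exact ⟨t, ht, h0 ▸ Nat.zero_le _⟩
    · by_contra hc
      push_neg at hc
      obtain ⟨r'', hr''⟩ : ∃ r'', r' = r'' + 1 := ⟨r' - 1, (Nat.succ_pred_eq_of_pos hpos).symm⟩
      have hstab : ∀ t ∈ M.Succ s a₀, bvv M T r'' t = buu M T t := by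
        intro t ht
        exact bvv_eq_buu_of_brank_le M T (by have := hc t ht; omega)
      have hle : bvv M T r' s ≤ buu M T s := by
        have h1 : bvv M T r' s ≤
            (M.C s a₀ : ℕ∞) + ⨆ t ∈ M.Succ s a₀, bvv M T r'' t := by
          rw [hr'', bvv_succ]
          simp only [CMDP.bellman, if_neg hT]
          exact iInf_le _ a₀
        have h2 : (⨆ t ∈ M.Succ s a₀, bvv M T r'' t) ≤
            ⨆ t ∈ M.Succ s a₀, bvv M T r' t := by
          refine iSup₂_le fun t ht => ?_
          calc bvv M T r'' t = buu M T t := hstab t ht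
            _ ≤ bvv M T r' t := buu_le M T r' t
            _ ≤ ⨆ t ∈ M.Succ s a₀, bvv M T r' t := le_biSup _ ht
        calc bvv M T r' s ≤ _ := h1
          _ ≤ (M.C s a₀ : ℕ∞) + ⨆ t ∈ M.Succ s a₀, bvv M T r' t :=
            add_le_add_right h2 _
          _ = buu M T s := ha₀
      have heq : bvv M T r' s = buu M T s := le_antisymm hle (buu_le M T r' s)
      have := brank_le_of_bvv_eq M T heq
      omega
  obtain ⟨t, ht, hrk⟩ := hex
  refine ⟨a₀, t, ht, by omega, ?_⟩
  rcases lt_or_ge (buu M T t) (buu M T s) with hlt | hge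
  · exact Or.inl hlt
  · right
    have hb := hsucc t ht
    have h3 : buu M T t ≤ bvv M T r' t := buu_le M T r' t
    have h4 : bvv M T r' t ≤ buu M T s :=
      le_trans (self_le_add_left _ _) hb
    have heq : buu M T t = buu M T s := le_antisymm (le_trans h3 h4) hge
    have h5 : bvv M T r' t = buu M T t :=
      le_antisymm (heq ▸ h4) h3
    have := brank_le_of_bvv_eq M T h5
    refine ⟨heq, by omega⟩

/-- Lexicographic order used to ensure simplicity of the constructed path. -/
def blex (t s : S) : Prop :=
  buu M T t < buu M T s ∨ (buu M T t = buu M T s ∧ brank M T t < brank M T s)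

lemma blex_trans {x y z : S} (h1 : blex M T x y) (h2 : blex M T y z) : blex M T x z := by
  rcases h1 with h1 | ⟨h1, h1'⟩ <;> rcases h2 with h2 | ⟨h2, h2'⟩
  · exact Or.inl (lt_trans h1 h2)
  · exact Or.inl (h2 ▸ h1)
  · exact Or.inl (h1 ▸ h2)
  · exact Or.inr ⟨h1.trans h2, lt_trans h1' h2'⟩

lemma blex_ne {x y : S} (h : blex M T x y) : x ≠ y := by
  rintro rfl
  rcases h with h | ⟨_, h⟩ <;> exact lt_irrefl _ h

/-- From any state one can build a valid simple path of length `rank s`. -/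
lemma exists_simple_path : ∀ (r : ℕ) (s : S), r ≤ brank M T s →
    ∃ steps : List (A × S), M.ValidPath s steps ∧ (s :: steps.map Prod.snd).Nodup ∧
      steps.length = r ∧ ∀ t ∈ steps.map Prod.snd, blex M T t s := by
  intro r
  induction r with
  | zero =>
    intro s _
    exact ⟨[], trivial, by simp, rfl, by simp⟩
  | succ r ih =>
    intro s hr
    obtain ⟨a, t, ht, hrk, hlex⟩ := brank_step M T s (by omega)
    obtain ⟨steps, hv, hnd, hlen, hall⟩ := ih t (by omega)
    refine ⟨(a, t) :: steps, ⟨ht, hv⟩, ?_, by simp [hlen], ?_⟩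
    · simp only [List.map_cons, List.nodup_cons] at hnd ⊢
      refine ⟨?_, hnd⟩
      simp only [List.mem_cons, not_or]
      refine ⟨fun h => blex_ne M T hlex h.symm, ?_⟩
      intro hmem
      exact blex_ne M T (blex_trans M T (hall s hmem) hlex) rfl
    · intro x hx
      simp only [List.map_cons, List.mem_cons] at hx
      rcases hx with rfl | hx
      · exact hlex
      · exact blex_trans M T (hall x hx) hlex

lemma brank_le_longestSimple (s : S) : brank M T s ≤ M.longestSimple := by
  obtain ⟨steps, hv, hnd, hlen, -⟩ := exists_simple_path M T (brank M T s) s le_rfl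
  have hmem : brank M T s ∈ {n | ∃ (s : S) (steps : List (A × S)),
      M.ValidPath s steps ∧ (s :: steps.map Prod.snd).Nodup ∧ steps.length = n} :=
    ⟨s, steps, hv, hnd, hlen⟩
  refine le_csSup ⟨Fintype.card S, ?_⟩ hmem
  rintro n ⟨s', steps', _, hnd', hlen'⟩
  have := hnd'.length_le_card
  simp only [List.length_cons, List.length_map] at this
  omega

end BellmanFP

open CMDP in
/-- Iterating the Bellman operator on `x_T` reaches a fixed point within `n` steps,
`n` the length of the longest simple path. -/
theorem bellman_fixed_point {S A : Type} [Fintype S] (M : CMDP S A) (T : Set S) :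
    (M.bellman T)^[M.longestSimple + 1] (xTvec T) =
      (M.bellman T)^[M.longestSimple] (xTvec T) := by
  funext s
  have h1 : brank M T s ≤ M.longestSimple := brank_le_longestSimple M T s
  have e1 : bvv M T (M.longestSimple + 1) s = buu M T s :=
    bvv_eq_buu_of_brank_le M T (by omega)
  have e2 : bvv M T M.longestSimple s = buu M T s :=
    bvv_eq_buu_of_brank_le M T h1
  show bvv M T (M.longestSimple + 1) s = bvv M T M.longestSimple s
  rw [e1, e2]
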